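/- arXiv:2404.11450 — 2 statements merged into one kernel-verified Lean document; each statement's English description precedes it below -/
import Mathlib

section
/- The Optimized Unary Encoding (OUE) perturbation mechanism satisfies ε-local differential privacy: for any two one-hot input vectors V1, V2 of length d and any output vector y in {0,1}^d, Pr[Ψ(V1)=y] ≤ e^ε · Pr[Ψ(V2)=y]. -/
open Finset

/-- Probability that the OUE mechanism, applied to input vector `V`, outputs `y`:
each bit is perturbed independently; a true bit outputs 1 with probability 1/2,
a false bit outputs 1 with probability 1/(e^ε+1). -/
noncomputable def oueProb {d : ℕ} (ε : ℝ) (V y : Fin d → Bool) : ℝ :=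
  ∏ i, (if V i then (1 : ℝ) / 2
        else if y i then 1 / (Real.exp ε + 1) else Real.exp ε / (Real.exp ε + 1))

/-- The OUE perturbation mechanism satisfies ε-LDP: for any one-hot inputs V1, V2
and any output y, Pr[Ψ(V1)=y] ≤ e^ε · Pr[Ψ(V2)=y]. -/
theorem oue_satisfies_LDP {d : ℕ} (ε : ℝ) (hε : 0 ≤ ε)
    (V1 V2 y : Fin d → Bool)
    (h1 : ∃ a : Fin d, V1 = fun j => decide (j = a))
    (h2 : ∃ a : Fin d, V2 = fun j => decide (j = a)) :
    oueProb ε V1 y ≤ Real.exp ε * oueProb ε V2 y := by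
  obtain ⟨a, rfl⟩ := h1
  obtain ⟨b, rfl⟩ := h2
  have he : (1:ℝ) ≤ Real.exp ε := Real.one_le_exp hε
  have hpos : (0:ℝ) < Real.exp ε + 1 := by positivity
  set E := Real.exp ε with hE
  by_cases hab : a = b
  · subst hab
    have hnn : 0 ≤ oueProb ε (fun j => decide (j = a)) y := by
      apply Finset.prod_nonneg
      intro i _
      split_ifs <;> positivity
    nlinarith
  · set f : Fin d → Bool → ℝ := fun i V =>
      (if V then (1 : ℝ) / 2
        else if y i then 1 / (E + 1) else E / (E + 1)) with hf
    have key : ∀ (V : Fin d → Bool),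
        oueProb ε V y = f a (V a) * (f b (V b) * ∏ i ∈ (univ.erase a).erase b, f i (V i)) := by
      intro V
      rw [oueProb]
      rw [← Finset.mul_prod_erase univ _ (Finset.mem_univ a),
          ← Finset.mul_prod_erase _ _ (Finset.mem_erase.mpr ⟨Ne.symm hab, Finset.mem_univ b⟩)]
    rw [key, key]
    have hR : 0 ≤ ∏ i ∈ (univ.erase a).erase b, f i (decide (i = b)) := by
      apply Finset.prod_nonneg
      intro i _
      simp only [hf]
      split_ifs <;> positivity
    have hRe : (∏ i ∈ (univ.erase a).erase b, f i (decide (i = a)))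
        = ∏ i ∈ (univ.erase a).erase b, f i (decide (i = b)) := by
      apply Finset.prod_congr rfl
      intro i hi
      simp only [Finset.mem_erase] at hi
      rw [decide_eq_false hi.2.1, decide_eq_false hi.1]
    rw [hRe]
    simp only [decide_eq_true_eq, hab, Ne.symm hab, if_false, decide_true, decide_false]
    have hfa1 : f a true = 1/2 := by simp [hf]
    have hfb2 : f b true = 1/2 := by simp [hf]
    have hkey : f b false ≤ E * f a false := by
      have hEpos : (0:ℝ) < E := Real.exp_pos ε
      simp only [hf, Bool.false_eq_true, if_false]
      split_ifs <;> rw [← mul_div_assoc, div_le_div_iff₀ hpos hpos] <;> nlinarith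
    rw [hfa1, hfb2]
    have : f b false * (1/2 * ∏ i ∈ (univ.erase a).erase b, f i (decide (i = b)))
        ≤ (E * f a false) * (1/2 * ∏ i ∈ (univ.erase a).erase b, f i (decide (i = b))) := by
      apply mul_le_mul_of_nonneg_right hkey
      positivity
    calc 1/2 * (f b false * ∏ i ∈ (univ.erase a).erase b, f i (decide (i = b)))
        = f b false * (1/2 * ∏ i ∈ (univ.erase a).erase b, f i (decide (i = b))) := by ring
      _ ≤ (E * f a false) * (1/2 * ∏ i ∈ (univ.erase a).erase b, f i (decide (i = b))) := this
      _ = E * (f a false * (1/2 * ∏ i ∈ (univ.erase a).erase b, f i (decide (i = b)))) := by ring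
end

section
/- The variance of the OUE frequency estimator when the true frequency of x is 0 equals 4e^ε / (n(e^ε − 1)^2): with n independent users none of whom hold value x, each reporting bit x as 1 with probability q = 1/(e^ε+1), the estimator f̂(x) = (C/n − q)/(1/2 − q), where C is the number of users reporting 1 at bit x, has variance q(1−q)/(n(1/2 − q)^2) = 4e^ε/(n(e^ε−1)^2). -/
open Finset

private lemma oue_sumL1 (x y : ℝ) (n : ℕ) :
    ∑ k ∈ Finset.range (n+1), (n.choose k : ℝ) * x^k * y^(n-k) = (x+y)^n := by
  rw [add_pow]
  exact Finset.sum_congr rfl fun k _ => by ring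

private lemma oue_sumL2 (x y : ℝ) (n : ℕ) :
    ∑ k ∈ Finset.range (n+1), (k:ℝ) * ((n.choose k : ℝ) * x^k * y^(n-k))
      = (n:ℝ) * x * (x+y)^(n-1) := by
  cases n with
  | zero => simp
  | succ m =>
    rw [Finset.sum_range_succ']
    have h : ∀ k ∈ Finset.range (m+1),
        ((k+1 : ℕ):ℝ) * (((m+1).choose (k+1) : ℝ) * x^(k+1) * y^(m+1-(k+1)))
          = ((m+1:ℕ):ℝ) * x * ((m.choose k : ℝ) * x^k * y^(m-k)) := by
      intro k _
      have hc : ((m+1).choose (k+1) : ℝ) * ((k:ℝ)+1) = ((m:ℝ)+1) * (m.choose k : ℝ) := by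
        have := Nat.add_one_mul_choose_eq m k
        exact_mod_cast (congrArg (Nat.cast (R := ℝ)) this).symm
      rw [Nat.succ_sub_succ]
      push_cast
      linear_combination x^(k+1) * y^(m-k) * hc
    rw [Finset.sum_congr rfl h, ← Finset.mul_sum, oue_sumL1]
    simp

private lemma oue_sumL3 (x y : ℝ) (n : ℕ) (hn : 1 ≤ n) :
    ∑ k ∈ Finset.range (n+1), (k:ℝ) * ((k:ℝ)-1) * ((n.choose k : ℝ) * x^k * y^(n-k))
      = (n:ℝ) * x * (((n-1:ℕ):ℝ) * x * (x+y)^(n-1-1)) := by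
  obtain ⟨m, rfl⟩ : ∃ m, n = m + 1 := ⟨n - 1, (Nat.succ_pred_eq_of_pos hn).symm⟩
  rw [Finset.sum_range_succ']
  have h : ∀ k ∈ Finset.range (m+1),
      ((k+1 : ℕ):ℝ) * (((k+1 : ℕ):ℝ) - 1) * (((m+1).choose (k+1) : ℝ) * x^(k+1) * y^(m+1-(k+1)))
        = ((m+1:ℕ):ℝ) * x * ((k:ℝ) * ((m.choose k : ℝ) * x^k * y^(m-k))) := by
    intro k _
    have hc : ((m+1).choose (k+1) : ℝ) * ((k:ℝ)+1) = ((m:ℝ)+1) * (m.choose k : ℝ) := by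
      have := Nat.add_one_mul_choose_eq m k
      exact_mod_cast (congrArg (Nat.cast (R := ℝ)) this).symm
    rw [Nat.succ_sub_succ]
    push_cast
    linear_combination (k:ℝ) * x^(k+1) * y^(m-k) * hc
  rw [Finset.sum_congr rfl h, ← Finset.mul_sum, oue_sumL2 x y m]
  simp

/-- Variance of the OUE frequency estimator when the true frequency of x is 0:
with C ~ Binomial(n, q), q = 1/(e^ε+1), the estimator f̂ = (C/n − q)/(1/2 − q)
has variance 4e^ε/(n(e^ε−1)²). -/
theorem oue_variance (ε : ℝ) (hε : 0 < ε) (n : ℕ) (hn : 1 ≤ n) :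
    let q : ℝ := 1 / (Real.exp ε + 1)
    let P : ℕ → ℝ := fun k => (n.choose k : ℝ) * q ^ k * (1 - q) ^ (n - k)
    let est : ℕ → ℝ := fun k => ((k : ℝ) / n - q) / (1/2 - q)
    let mean : ℝ := ∑ k ∈ Finset.range (n + 1), P k * est k
    ∑ k ∈ Finset.range (n + 1), P k * (est k - mean) ^ 2
      = 4 * Real.exp ε / (n * (Real.exp ε - 1) ^ 2) := by
  intro q P est mean
  have hq : q = 1 / (Real.exp ε + 1) := rfl
  have hP : ∀ k, P k = (n.choose k : ℝ) * q ^ k * (1 - q) ^ (n - k) := fun _ => rfl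
  have hest : ∀ k, est k = ((k : ℝ) / n - q) / (1/2 - q) := fun _ => rfl
  have hmeandef : mean = ∑ k ∈ Finset.range (n + 1), P k * est k := rfl
  clear_value q P est mean
  have he1 : 1 < Real.exp ε := by
    calc (1:ℝ) = Real.exp 0 := (Real.exp_zero).symm
    _ < Real.exp ε := Real.exp_lt_exp.2 hε
  have hep : (0:ℝ) < Real.exp ε + 1 := by linarith
  have he0 : Real.exp ε - 1 ≠ 0 := by linarith
  have hep0 : Real.exp ε + 1 ≠ 0 := ne_of_gt hep
  have hn0 : (n:ℝ) ≠ 0 := by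
    exact_mod_cast Nat.one_le_iff_ne_zero.mp hn
  have hspos : (0:ℝ) < 1/2 - q := by
    rw [hq, sub_pos, div_lt_div_iff₀ hep two_pos]
    linarith
  have hs0 : (1:ℝ)/2 - q ≠ 0 := ne_of_gt hspos
  set s : ℝ := 1/2 - q with hsdef
  have hs_val : s = (Real.exp ε - 1)/(2*(Real.exp ε + 1)) := by
    rw [hsdef, hq]
    field_simp
    ring
  have hq1 : 1 - q = Real.exp ε / (Real.exp ε + 1) := by
    rw [hq]
    field_simp
    ring
  have hS0 : ∑ k ∈ Finset.range (n+1), P k = 1 := by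
    simp only [hP]
    have h := oue_sumL1 q (1-q) n
    rw [show q + (1-q) = 1 by ring, one_pow] at h
    exact h
  have hS1 : ∑ k ∈ Finset.range (n+1), (k:ℝ) * P k = (n:ℝ) * q := by
    simp only [hP]
    have h := oue_sumL2 q (1-q) n
    rw [show q + (1-q) = 1 by ring, one_pow, mul_one] at h
    exact h
  have hS2 : ∑ k ∈ Finset.range (n+1), (k:ℝ) * ((k:ℝ)-1) * P k
      = (n:ℝ) * ((n:ℝ)-1) * q^2 := by
    simp only [hP]
    have h := oue_sumL3 q (1-q) n hn
    rw [show q + (1-q) = 1 by ring, one_pow] at h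
    have hc : ((n-1:ℕ):ℝ) = (n:ℝ) - 1 := by
      push_cast [hn]
      ring
    rw [hc] at h
    rw [h]; ring
  have hmean : mean = 0 := by
    rw [hmeandef]
    have hpt : ∀ k ∈ Finset.range (n+1),
        P k * est k = (1/((n:ℝ)*s)) * ((k:ℝ) * P k) + (-(q/s)) * P k := by
      intro k _
      rw [hest k]
      field_simp
      ring
    rw [Finset.sum_congr rfl hpt, Finset.sum_add_distrib, ← Finset.mul_sum, ← Finset.mul_sum,
      hS0, hS1]
    field_simp
    ring
  have hred : ∑ k ∈ Finset.range (n+1), P k * (est k - mean) ^ 2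
      = ∑ k ∈ Finset.range (n+1), P k * est k ^ 2 := by
    simp [hmean]
  rw [hred]
  have hpt2 : ∀ k ∈ Finset.range (n+1),
      P k * est k ^ 2 = (1/((n:ℝ)*s))^2 * ((k:ℝ) * ((k:ℝ)-1) * P k)
        + ((1/((n:ℝ)*s))^2*(1-2*(n:ℝ)*q)) * ((k:ℝ) * P k)
        + ((1/((n:ℝ)*s))^2*(n:ℝ)^2*q^2) * P k := by
    intro k _
    rw [hest k]
    field_simp
    ring
  rw [Finset.sum_congr rfl hpt2, Finset.sum_add_distrib, Finset.sum_add_distrib,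
    ← Finset.mul_sum, ← Finset.mul_sum, ← Finset.mul_sum, hS0, hS1, hS2]
  have hstep : (1/((n:ℝ)*s))^2 * ((n:ℝ)*((n:ℝ)-1)*q^2)
      + ((1/((n:ℝ)*s))^2*(1-2*(n:ℝ)*q)) * ((n:ℝ)*q)
      + ((1/((n:ℝ)*s))^2*(n:ℝ)^2*q^2) * 1 = q*(1-q)/((n:ℝ)*s^2) := by
    field_simp
    ring
  rw [hstep, hs_val, hq1, hq]
  rw [div_eq_div_iff (by positivity) (by
    have : (0:ℝ) < (n:ℝ) := by positivity
    have h2 : (0:ℝ) < (Real.exp ε - 1)^2 := by positivity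
    positivity)]
  field_simp
  ring
end
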